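/- Suppose s, x^0 ∈ [κ, K]^W with 0 < κ ≤ K, and the gradient-descent iterates x^{t+1}_i = x^t_i − η Σ_j N_{ij} x^t_j (x^t_i x^t_j − s_i s_j) use step-size 0 ≤ η ≤ κ^2 / (K^2 ‖N D_s^2‖_∞). Then for all t, V(x^t) ≤ K/κ and x^t ∈ [κ^2/K, K^2/κ]^W. -/

import Mathlib

/-- If `s, x⁰ ∈ [κ,K]^W` and the gradient-descent step-size satisfies
`0 ≤ η ≤ κ²/(K² ‖N D_s²‖_∞)`, then all iterates satisfy `V(xᵗ) ≤ K/κ`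
and `xᵗ ∈ [κ²/K, K²/κ]^W`. -/
theorem stmt10 (W : ℕ) (N : Matrix (Fin W) (Fin W) ℝ)
    (hsymm : ∀ i j, N i j = N j i) (hnonneg : ∀ i j, 0 ≤ N i j)
    (hdiag : ∀ i, N i i = 0)
    (κ K : ℝ) (hκ : 0 < κ) (hκK : κ ≤ K)
    (s : Fin W → ℝ) (hs : ∀ i, s i ∈ Set.Icc κ K)
    (η : ℝ) (hη0 : 0 ≤ η)
    (hη : η ≤ κ ^ 2 / (K ^ 2 * (⨆ i, ∑ j, |N i j| * (s j) ^ 2)))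
    (x : ℕ → Fin W → ℝ) (hx0 : ∀ i, x 0 i ∈ Set.Icc κ K)
    (hrec : ∀ t i, x (t + 1) i =
      x t i - η * ∑ j, N i j * x t j * (x t i * x t j - s i * s j)) :
    ∀ t, (⨆ i, max (x t i / s i) (s i / x t i)) ≤ K / κ ∧
      ∀ i, x t i ∈ Set.Icc (κ ^ 2 / K) (K ^ 2 / κ) := by
  have hK : (0 : ℝ) < K := lt_of_lt_of_le hκ hκK
  have hsκ : ∀ i, κ ≤ s i := fun i => (hs i).1
  have hsK : ∀ i, s i ≤ K := fun i => (hs i).2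
  have hspos : ∀ i, 0 < s i := fun i => lt_of_lt_of_le hκ (hsκ i)
  have hκK0 : (0 : ℝ) ≤ κ / K := (div_pos hκ hK).le
  have hKκ0 : (0 : ℝ) ≤ K / κ := (div_pos hK hκ).le
  set M : ℝ := ⨆ i, ∑ j, |N i j| * (s j) ^ 2 with hM
  -- key invariant
  have key : ∀ t i, s i * (κ / K) ≤ x t i ∧ x t i ≤ s i * (K / κ) := by
    intro t
    induction t with
    | zero =>
      intro i
      constructor
      · calc s i * (κ / K) ≤ K * (κ / K) :=
              mul_le_mul_of_nonneg_right (hsK i) hκK0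
          _ = κ := by field_simp
          _ ≤ x 0 i := (hx0 i).1
      · calc x 0 i ≤ K := (hx0 i).2
          _ = κ * (K / κ) := by field_simp
          _ ≤ s i * (K / κ) := mul_le_mul_of_nonneg_right (hsκ i) hKκ0
    | succ t ih =>
      intro i
      have hxpos : ∀ j, 0 < x t j := fun j =>
        lt_of_lt_of_le (mul_pos (hspos j) (div_pos hκ hK)) (ih j).1
      set A : ℝ := ∑ j, N i j * (x t j) ^ 2 with hA
      set B : ℝ := ∑ j, N i j * (x t j * s j) with hB
      have hx' : x (t + 1) i = x t i * (1 - η * A) + s i * (η * B) := by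
        rw [hrec t i]
        have : ∀ j ∈ Finset.univ, N i j * x t j * (x t i * x t j - s i * s j)
            = x t i * (N i j * (x t j) ^ 2) - s i * (N i j * (x t j * s j)) := by
          intro j _; ring
        rw [Finset.sum_congr rfl this, Finset.sum_sub_distrib, ← Finset.mul_sum,
          ← Finset.mul_sum, hA, hB]
        ring
      have hA0 : 0 ≤ A := Finset.sum_nonneg fun j _ =>
        mul_nonneg (hnonneg i j) (sq_nonneg _)
      -- bound η * A ≤ 1
      set C : ℝ := ∑ j, |N i j| * (s j) ^ 2 with hC
      have hC0 : 0 ≤ C := Finset.sum_nonneg fun j _ =>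
        mul_nonneg (abs_nonneg _) (sq_nonneg _)
      have hCM : C ≤ M := by
        apply le_ciSup (f := fun i => ∑ j, |N i j| * (s j) ^ 2)
          (Set.Finite.bddAbove (Set.finite_range _)) i
      have hAC : A ≤ (K / κ) ^ 2 * C := by
        calc A ≤ ∑ j, N i j * (s j * (K / κ)) ^ 2 := by
              apply Finset.sum_le_sum
              intro j _
              apply mul_le_mul_of_nonneg_left _ (hnonneg i j)
              exact pow_le_pow_left₀ (hxpos j).le (ih j).2 2
          _ = (K / κ) ^ 2 * C := by
              rw [hC, Finset.mul_sum]
              apply Finset.sum_congr rfl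
              intro j _
              rw [abs_of_nonneg (hnonneg i j)]
              ring
      have hηA : η * A ≤ 1 := by
        rcases eq_or_lt_of_le hC0 with hCz | hCpos
        · rw [← hCz, mul_zero] at hAC
          calc η * A ≤ η * 0 := mul_le_mul_of_nonneg_left hAC hη0
            _ ≤ 1 := by norm_num
        · have hMpos : 0 < M := lt_of_lt_of_le hCpos hCM
          calc η * A ≤ η * ((K / κ) ^ 2 * C) :=
                mul_le_mul_of_nonneg_left hAC hη0
            _ ≤ (κ ^ 2 / (K ^ 2 * M)) * ((K / κ) ^ 2 * C) := by
                apply mul_le_mul_of_nonneg_right hη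
                exact mul_nonneg (sq_nonneg _) hC0
            _ = C / M := by field_simp
            _ ≤ 1 := (div_le_one hMpos).2 hCM
      -- relate B and A
      have hBA_up : B ≤ (K / κ) * A := by
        rw [hA, Finset.mul_sum]
        apply Finset.sum_le_sum
        intro j _
        have hx := (hxpos j).le
        have key2 : s j * κ ≤ K * x t j := by
          have h := mul_le_mul_of_nonneg_right (ih j).1 hK.le
          have he : s j * (κ / K) * K = s j * κ := by field_simp
          linarith [he ▸ h]
        have h1 : x t j * s j ≤ (K / κ) * (x t j) ^ 2 := by
          rw [div_mul_eq_mul_div, le_div_iff₀ hκ]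
          nlinarith [mul_le_mul_of_nonneg_left key2 hx]
        calc N i j * (x t j * s j) ≤ N i j * ((K / κ) * (x t j) ^ 2) :=
              mul_le_mul_of_nonneg_left h1 (hnonneg i j)
          _ = (K / κ) * (N i j * (x t j) ^ 2) := by ring
      have hBA_lo : (κ / K) * A ≤ B := by
        rw [hA, Finset.mul_sum]
        apply Finset.sum_le_sum
        intro j _
        have hx := (hxpos j).le
        have key2 : x t j * κ ≤ s j * K := by
          have h := mul_le_mul_of_nonneg_right (ih j).2 hκ.le
          have he : s j * (K / κ) * κ = s j * K := by field_simp
          linarith [he ▸ h]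
        have h1 : (κ / K) * (x t j) ^ 2 ≤ x t j * s j := by
          rw [div_mul_eq_mul_div, div_le_iff₀ hK]
          nlinarith [mul_le_mul_of_nonneg_left key2 hx]
        calc (κ / K) * (N i j * (x t j) ^ 2)
            = N i j * ((κ / K) * (x t j) ^ 2) := by ring
          _ ≤ N i j * (x t j * s j) :=
              mul_le_mul_of_nonneg_left h1 (hnonneg i j)
      have hs0 : (0 : ℝ) ≤ s i := (hspos i).le
      constructor
      · rw [hx']
        nlinarith [mul_nonneg (sub_nonneg.2 (ih i).1) (sub_nonneg.2 hηA),
          mul_nonneg (mul_nonneg hs0 hη0) (sub_nonneg.2 hBA_lo)]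
      · rw [hx']
        nlinarith [mul_nonneg (sub_nonneg.2 (ih i).2) (sub_nonneg.2 hηA),
          mul_nonneg (mul_nonneg hs0 hη0) (sub_nonneg.2 hBA_up)]
  intro t
  refine ⟨?_, fun i => ⟨?_, ?_⟩⟩
  · rcases isEmpty_or_nonempty (Fin W) with he | hne
    · rw [Real.iSup_of_isEmpty]
      exact hKκ0
    · apply ciSup_le
      intro i
      have h1 := (key t i).1
      have h2 := (key t i).2
      have hxpos : 0 < x t i :=
        lt_of_lt_of_le (mul_pos (hspos i) (div_pos hκ hK)) h1
      apply max_le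
      · rw [div_le_div_iff₀ (hspos i) hκ]
        have h := mul_le_mul_of_nonneg_right h2 hκ.le
        have he : s i * (K / κ) * κ = s i * K := by field_simp
        nlinarith [he ▸ h]
      · rw [div_le_div_iff₀ hxpos hκ]
        have h := mul_le_mul_of_nonneg_right h1 hK.le
        have he : s i * (κ / K) * K = s i * κ := by field_simp
        nlinarith [he ▸ h]
  · calc κ ^ 2 / K = κ * (κ / K) := by ring
      _ ≤ s i * (κ / K) := mul_le_mul_of_nonneg_right (hsκ i) hκK0
      _ ≤ x t i := (key t i).1
  · calc x t i ≤ s i * (K / κ) := (key t i).2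
      _ ≤ K * (K / κ) := mul_le_mul_of_nonneg_right (hsK i) hKκ0
      _ = K ^ 2 / κ := by ring
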